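/- arXiv:2601.13280 — 2 statements merged into one kernel-verified Lean document; each statement's English description precedes it below -/
import Mathlib

section
/- Let E be a finite-dimensional real normed vector space, F a real normed vector space, f : E → F a C¹ function, and X ⊆ E a nonempty compact set with f(x) = 0 for all x ∈ X. Then for every compact set U ⊆ E there exists a constant C > 0 such that ‖f(p)‖ ≤ C · infDist(p, X) for all p ∈ U. -/
/-- A `C¹` function vanishing on a nonempty compact set `X` in a
finite-dimensional space is bounded by a constant multiple of the distance to
`X` on every compact set. -/
theorem norm_le_const_mul_infDist_of_contDiff
    {E F : Type*} [NormedAddCommGroup E] [NormedSpace ℝ E] [FiniteDimensional ℝ E]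
    [NormedAddCommGroup F] [NormedSpace ℝ F]
    (f : E → F) (hf : ContDiff ℝ 1 f)
    (X : Set E) (hX : X.Nonempty) (hXcpt : IsCompact X)
    (hfX : ∀ x ∈ X, f x = 0)
    (U : Set E) (hU : IsCompact U) :
    ∃ C : ℝ, 0 < C ∧ ∀ p ∈ U, ‖f p‖ ≤ C * Metric.infDist p X := by
  obtain ⟨R, hR⟩ := (hU.union hXcpt).isBounded.subset_closedBall 0
  set K := Metric.closedBall (0 : E) R with hKdef
  have hKcpt : IsCompact K := isCompact_closedBall 0 R
  have hKconv : Convex ℝ K := convex_closedBall 0 R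
  have hUK : U ⊆ K := (Set.subset_union_left).trans hR
  have hXK : X ⊆ K := (Set.subset_union_right).trans hR
  have hcont : ContinuousOn (fun x => ‖fderiv ℝ f x‖) K :=
    ((hf.continuous_fderiv one_ne_zero).norm).continuousOn
  obtain ⟨C, hC⟩ := hKcpt.exists_bound_of_continuousOn hcont
  obtain ⟨x₀, hx₀⟩ := hX
  have hC0 : 0 ≤ C := le_trans (norm_nonneg _) (hC x₀ (hXK hx₀))
  refine ⟨C + 1, by linarith, fun p hp => ?_⟩
  obtain ⟨x, hxX, hxd⟩ := hXcpt.exists_infDist_eq_dist ⟨x₀, hx₀⟩ p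
  have hbound : ∀ y ∈ K, ‖fderiv ℝ f y‖ ≤ C + 1 := fun y hy => by
    have := hC y hy; rw [norm_norm] at this; linarith
  have hdiff : ∀ y ∈ K, HasFDerivWithinAt f (fderiv ℝ f y) K y := fun y hy =>
    (hf.differentiable one_ne_zero y).hasFDerivAt.hasFDerivWithinAt
  have := hKconv.norm_image_sub_le_of_norm_hasFDerivWithin_le hdiff hbound
    (hXK hxX) (hUK hp)
  rw [hfX x hxX, sub_zero] at this
  calc ‖f p‖ ≤ (C + 1) * ‖p - x‖ := this
    _ = (C + 1) * Metric.infDist p X := by rw [hxd, dist_eq_norm]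
end

section
/- Let E be a real Hilbert space and let D ⊆ Ω be nonempty closed convex subsets of E, with nearest-point projections π_D and π_Ω. Let p ∈ E with p ∉ Ω, and let λ ≥ 0. Then ‖λ • (‖p − π_D(p)‖⁻¹ • (p − π_D(p))) + 2 • (p − π_Ω(p))‖ ≥ 2 · infDist(p, Ω). -/
open RealInnerProductSpace


/-- The gradient lower bound `|∇u^λ| ≥ 2 d_Ω` for `u^λ = λ d_D + d_Ω²` in a
real Hilbert space, for nested nonempty closed convex sets `D ⊆ Ω`, a point
`p ∉ Ω`, and `λ ≥ 0`. -/
theorem norm_grad_combination_ge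
    {E : Type*} [NormedAddCommGroup E] [InnerProductSpace ℝ E] [CompleteSpace E]
    (D Ω : Set E) (hD : D.Nonempty) (hDc : IsClosed D) (hDconv : Convex ℝ D)
    (hΩ : Ω.Nonempty) (hΩc : IsClosed Ω) (hΩconv : Convex ℝ Ω)
    (hDΩ : D ⊆ Ω)
    (πD πΩ : E → E)
    (hπD : ∀ p, πD p ∈ D ∧ dist p (πD p) = Metric.infDist p D)
    (hπΩ : ∀ p, πΩ p ∈ Ω ∧ dist p (πΩ p) = Metric.infDist p Ω)
    (p : E) (hp : p ∉ Ω) (lam : ℝ) (hlam : 0 ≤ lam) :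
    2 * Metric.infDist p Ω ≤
      ‖lam • (‖p - πD p‖⁻¹ • (p - πD p)) + (2 : ℝ) • (p - πΩ p)‖ := by
  obtain ⟨hmem, hdist⟩ := hπΩ p
  obtain ⟨hmemD, _⟩ := hπD p
  have hΩD : πD p ∈ Ω := hDΩ hmemD
  -- πΩ p is a minimizer, so the variational inequality holds
  have hiInf : ‖p - πΩ p‖ = ⨅ w : Ω, ‖p - w‖ := by
    have := hdist
    rw [Metric.infDist_eq_iInf] at this
    simpa [dist_eq_norm] using this
  have hvar : ∀ w ∈ Ω, (inner ℝ (p - πΩ p) ( w - πΩ p) : ℝ) ≤ 0 :=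
    (norm_eq_iInf_iff_real_inner_le_zero hΩconv hmem).mp hiInf
  -- key inner product nonnegativity
  have hkey : 0 ≤ (inner ℝ (p - πΩ p) ( p - πD p) : ℝ) := by
    have h1 := hvar (πD p) hΩD
    have h2 : (inner ℝ (p - πΩ p) ( p - πD p) : ℝ)
        = (inner ℝ (p - πΩ p) ( p - πΩ p) : ℝ) - (inner ℝ (p - πΩ p) ( πD p - πΩ p) : ℝ) := by
      rw [← inner_sub_right]; congr 1; abel
    rw [h2, real_inner_self_eq_norm_sq]
    nlinarith [sq_nonneg ‖p - πΩ p‖]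
  set a := lam • (‖p - πD p‖⁻¹ • (p - πD p)) with ha
  set b := (2 : ℝ) • (p - πΩ p) with hb
  have hab : 0 ≤ (inner ℝ (a) ( b) : ℝ) := by
    rw [ha, hb, real_inner_smul_left, real_inner_smul_left, real_inner_smul_right]
    have : (0:ℝ) ≤ (inner ℝ (p - πD p) ( p - πΩ p) : ℝ) := by
      rwa [real_inner_comm]
    positivity
  have hnb : ‖b‖ = 2 * Metric.infDist p Ω := by
    rw [hb, norm_smul]
    rw [← hdist, dist_eq_norm]
    simp
  have hsq : ‖b‖ ^ 2 ≤ ‖a + b‖ ^ 2 := by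
    have := norm_add_sq_real a b
    nlinarith [sq_nonneg ‖a‖]
  have hfin : ‖b‖ ≤ ‖a + b‖ := by
    nlinarith [norm_nonneg b, norm_nonneg (a + b)]
  rw [← hnb]; exact hfin
end
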